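/- Let U be a unitary four-site gate, L even, t ≥ 1, and x, y lattice sites such that x ∉ LC. Then for all a, b : Matrix (Fin d) (Fin d) ℂ, d^{−L²} · Tr(a_x * 𝕌^{−t} * b_y * 𝕌^t) = (1/d²) · Tr(a) · Tr(b); in particular this dynamic correlation vanishes whenever a or b is traceless. -/

import Mathlib

open Matrix

/-- A matrix is unitary if it is inverted by its conjugate transpose on both sides. -/
def IsUnitary {n : Type*} [Fintype n] [DecidableEq n] (M : Matrix n n ℂ) : Prop :=
  M * Mᴴ = 1 ∧ Mᴴ * M = 1

/-- Index type of a four-site gate, legs ordered by the plaquette sites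
`(0,0), (1,0), (0,1), (1,1)`. -/
abbrev FourIdx (d : ℕ) := Fin d × Fin d × Fin d × Fin d

/-- Lattice sites of the `L × L` torus. -/
abbrev Site (L : ℕ) := ZMod L × ZMod L

/-- Index type of global operators: one `Fin d` leg per lattice site. -/
abbrev GlobalIdx (d L : ℕ) := Site L → Fin d

/-- The global operator `U_{p(x)}`, acting as the four-site gate `U` on the legs at the
plaquette sites `x, x+(1,0), x+(0,1), x+(1,1)` (in this order) and as the identity elsewhere. -/
noncomputable def plaqOp {d L : ℕ} [NeZero L] (U : Matrix (FourIdx d) (FourIdx d) ℂ)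
    (x : Site L) : Matrix (GlobalIdx d L) (GlobalIdx d L) ℂ :=
  Matrix.of fun f g =>
    if ∀ u : Site L, u ≠ x → u ≠ x + (1, 0) → u ≠ x + (0, 1) → u ≠ x + (1, 1) → f u = g u then
      U (f x, f (x + (1, 0)), f (x + (0, 1)), f (x + (1, 1)))
        (g x, g (x + (1, 0)), g (x + (0, 1)), g (x + (1, 1)))
    else 0

/-- The even layer `𝕌_ee`: product of the mutually commuting gates `U_{p(2i,2j)}`. -/
noncomputable def Uee (d L : ℕ) [NeZero L] (U : Matrix (FourIdx d) (FourIdx d) ℂ) :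
    Matrix (GlobalIdx d L) (GlobalIdx d L) ℂ :=
  (((List.range (L / 2)).flatMap fun i => (List.range (L / 2)).map fun j =>
      plaqOp U (((2 * i : ℕ) : ZMod L), ((2 * j : ℕ) : ZMod L)))).prod

/-- The odd layer `𝕌_oo`: product of the mutually commuting gates `U_{p(2i+1,2j+1)}`. -/
noncomputable def Uoo (d L : ℕ) [NeZero L] (U : Matrix (FourIdx d) (FourIdx d) ℂ) :
    Matrix (GlobalIdx d L) (GlobalIdx d L) ℂ :=
  (((List.range (L / 2)).flatMap fun i => (List.range (L / 2)).map fun j =>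
      plaqOp U (((2 * i + 1 : ℕ) : ZMod L), ((2 * j + 1 : ℕ) : ZMod L)))).prod

/-- One discrete time step `𝕌 = 𝕌_oo ⬝ 𝕌_ee`. -/
noncomputable def Ustep (d L : ℕ) [NeZero L] (U : Matrix (FourIdx d) (FourIdx d) ℂ) :
    Matrix (GlobalIdx d L) (GlobalIdx d L) ℂ :=
  Uoo d L U * Uee d L U

/-- The global operator acting as the `d × d` matrix `a` on leg `x` and as the identity
elsewhere. -/
noncomputable def siteOpG {d L : ℕ} [NeZero L] (a : Matrix (Fin d) (Fin d) ℂ) (x : Site L) :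
    Matrix (GlobalIdx d L) (GlobalIdx d L) ℂ :=
  Matrix.of fun f g =>
    (if ∀ u : Site L, u ≠ x → f u = g u then 1 else 0) * a (f x) (g x)

/-- Circular distance in `ZMod L`. -/
def cdist {L : ℕ} [NeZero L] (a b : ZMod L) : ℕ := min (a - b).val (b - a).val

/-- Torus ℓ∞-distance of two lattice sites. -/
def torusDist {L : ℕ} [NeZero L] (u v : Site L) : ℕ :=
  max (cdist u.1 v.1) (cdist u.2 v.2)

/-- The anchor site `m` of the plaquette containing `y`: with `ŷ ∈ {0,…,L−1}²` the
representative of `y`, `m_k = ŷ_k` if `ŷ_k` is odd and `m_k = ŷ_k − 1` if `ŷ_k` is even. -/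
def msite {L : ℕ} [NeZero L] (y : Site L) : Site L :=
  ((if Odd y.1.val then y.1 else y.1 - 1), (if Odd y.2.val then y.2 else y.2 - 1))

/-- The base of the light cone of `y` for time `t`: all sites within torus ℓ∞-distance
`2t − 1` of some site of the plaquette anchored at `msite y`. -/
def LCfin {L : ℕ} [NeZero L] (y : Site L) (t : ℕ) : Finset (Site L) :=
  Finset.univ.filter fun z =>
    ∃ w ∈ ({msite y, msite y + (1, 0), msite y + (0, 1), msite y + (1, 1)} : Finset (Site L)),
      torusDist w z ≤ 2 * t - 1
section DistLemmas
variable {L : ℕ} [NeZero L]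

lemma mod_small {u M : ℕ} (h : u < 2 * M) : u % M = if u < M then u else u - M := by
  split_ifs with h1
  · exact Nat.mod_eq_of_lt h1
  · rcases Nat.eq_zero_or_pos M with hM | hM
    · omega
    · rw [Nat.mod_eq_sub_mod (by omega), Nat.mod_eq_of_lt (by omega)]

lemma cdist_self (a : ZMod L) : cdist a a = 0 := by
  simp [cdist, sub_self, ZMod.val_zero]

lemma cdist_comm (a b : ZMod L) : cdist a b = cdist b a := by
  simp [cdist, Nat.min_comm]

lemma cdist_add_one_le (a : ZMod L) : cdist a (a + 1) ≤ 1 := by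
  have h1 : (a + 1) - a = 1 := by ring
  have hv : ((1 : ZMod L)).val ≤ 1 := by
    rw [show (1 : ZMod L) = ((1 : ℕ) : ZMod L) by norm_cast, ZMod.val_natCast]
    exact Nat.mod_le 1 L
  calc cdist a (a+1) ≤ ((a+1) - a).val := min_le_right _ _
    _ ≤ 1 := by rw [h1]; exact hv

lemma cdist_triangle (a b c : ZMod L) : cdist a c ≤ cdist a b + cdist b c := by
  rcases eq_or_ne a b with rfl | hab
  · rw [cdist_self]; omega
  rcases eq_or_ne b c with rfl | hbc
  · rw [cdist_self]; omega
  have hL : 0 < L := Nat.pos_of_ne_zero (NeZero.ne L)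
  have e1 : a - c = (a - b) + (b - c) := by ring
  have e2 : c - a = (c - b) + (b - a) := by ring
  have hp : (b - a).val = L - (a - b).val := by
    rw [show b - a = -(a - b) by ring, ZMod.neg_val, if_neg (sub_ne_zero.mpr hab)]
  have hq : (c - b).val = L - (b - c).val := by
    rw [show c - b = -(b - c) by ring, ZMod.neg_val, if_neg (sub_ne_zero.mpr hbc)]
  have hp0 : (a - b).val ≠ 0 := fun h => hab (sub_eq_zero.mp ((ZMod.val_eq_zero _).mp h))
  have hq0 : (b - c).val ≠ 0 := fun h => hbc (sub_eq_zero.mp ((ZMod.val_eq_zero _).mp h))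
  have hpl : (a - b).val < L := ZMod.val_lt _
  have hql : (b - c).val < L := ZMod.val_lt _
  have hr : (a - c).val = ((a - b).val + (b - c).val) % L := by rw [e1, ZMod.val_add]
  have hr' : (c - a).val = ((c - b).val + (b - a).val) % L := by rw [e2, ZMod.val_add]
  rw [mod_small (by omega)] at hr
  rw [mod_small (by omega)] at hr'
  unfold cdist
  split_ifs at hr hr' <;> omega

lemma torusDist_self (u : Site L) : torusDist u u = 0 := by
  simp [torusDist, cdist_self]

lemma torusDist_triangle (u v w : Site L) :
    torusDist u w ≤ torusDist u v + torusDist v w := by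
  unfold torusDist
  refine max_le ?_ ?_
  · exact le_trans (cdist_triangle _ v.1 _)
      (Nat.add_le_add (le_max_left _ _) (le_max_left _ _))
  · exact le_trans (cdist_triangle _ v.2 _)
      (Nat.add_le_add (le_max_right _ _) (le_max_right _ _))

end DistLemmas
section Supp
open Finset
variable {d L : ℕ} [NeZero L]

/-- Override `f` by `h` outside `S`. -/
def ovr (S : Finset (Site L)) (f h : GlobalIdx d L) : GlobalIdx d L :=
  fun u => if u ∈ S then f u else h u

/-- `M` is supported on the sites in `S`. -/
def SuppOn (S : Finset (Site L)) (M : Matrix (GlobalIdx d L) (GlobalIdx d L) ℂ) : Prop :=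
  (∀ f g : GlobalIdx d L, (¬ ∀ u ∉ S, f u = g u) → M f g = 0) ∧
  (∀ f g h : GlobalIdx d L, (∀ u ∉ S, f u = g u) →
      M f g = M (ovr S f h) (ovr S g h))

namespace SuppOn

variable {S T : Finset (Site L)} {M N : Matrix (GlobalIdx d L) (GlobalIdx d L) ℂ}

lemma mono (hST : S ⊆ T) (hM : SuppOn S M) : SuppOn T M := by
  constructor
  · intro f g hfg
    apply hM.1
    intro hall
    exact hfg fun u hu => hall u (fun h => hu (hST h))
  · intro f g h hfg
    by_cases hS : ∀ u ∉ S, f u = g u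
    · have h1 := hM.2 f g h hS
      have h2 := hM.2 (ovr T f h) (ovr T g h) h ?swap
      case swap =>
        intro u hu
        unfold ovr
        split_ifs with hT
        · exact hS u hu
        · rfl
      rw [h1, h2]
      congr 1
      · funext u
        unfold ovr
        by_cases h1 : u ∈ S
        · rw [if_pos h1, if_pos h1, if_pos (hST h1)]
        · rw [if_neg h1, if_neg h1]
      · funext u
        unfold ovr
        by_cases h1 : u ∈ S
        · rw [if_pos h1, if_pos h1, if_pos (hST h1)]
        · rw [if_neg h1, if_neg h1]
    · have z1 : M f g = 0 := hM.1 f g hS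
      push_neg at hS
      obtain ⟨u₀, hu₀, hne⟩ := hS
      have hu₀T : u₀ ∈ T := by
        by_contra hT
        exact hne (hfg u₀ hT)
      have z2 : M (ovr T f h) (ovr T g h) = 0 := by
        apply hM.1
        push_neg
        exact ⟨u₀, hu₀, by unfold ovr; rw [if_pos hu₀T, if_pos hu₀T]; exact hne⟩
      rw [z1, z2]

lemma conjT (hM : SuppOn S M) : SuppOn S Mᴴ := by
  constructor
  · intro f g hfg
    have : M g f = 0 := by
      apply hM.1
      intro hall
      exact hfg (fun u hu => (hall u hu).symm)
    simp [Matrix.conjTranspose_apply, this]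
  · intro f g h hfg
    have := hM.2 g f h (fun u hu => (hfg u hu).symm)
    simp only [Matrix.conjTranspose_apply, this]

lemma mul (hM : SuppOn S M) (hN : SuppOn S N) : SuppOn S (M * N) := by
  constructor
  · intro f g hfg
    rw [Matrix.mul_apply]
    apply Finset.sum_eq_zero
    intro k _
    by_cases h1 : ∀ u ∉ S, f u = k u
    · have h2 : ¬ ∀ u ∉ S, k u = g u := by
        intro h2
        exact hfg (fun u hu => (h1 u hu).trans (h2 u hu))
      rw [hN.1 k g h2, mul_zero]
    · rw [hM.1 f k h1, zero_mul]
  · intro f g h₀ hfg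
    rw [Matrix.mul_apply, Matrix.mul_apply]
    have hinv : Function.Involutive (fun (k : GlobalIdx d L) =>
        (fun u => if u ∈ S then k u else Equiv.swap (f u) (h₀ u) (k u) : GlobalIdx d L)) := by
      intro k
      funext u
      by_cases hu : u ∈ S <;> simp [hu]
    set τ := hinv.toPerm _ with hτdef
    have hτ : ∀ k u, τ k u = if u ∈ S then k u else Equiv.swap (f u) (h₀ u) (k u) :=
      fun k u => rfl
    conv_rhs => rw [← Equiv.sum_comp τ (fun k => M (ovr S f h₀) k * N k (ovr S g h₀))]
    apply Finset.sum_congr rfl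
    intro k _
    by_cases hk : ∀ u ∉ S, f u = k u
    · have hτk : τ k = ovr S k h₀ := by
        funext u
        by_cases hu : u ∈ S
        · simp [hτ, ovr, hu]
        · simp [hτ, ovr, hu, ← hk u hu, Equiv.swap_apply_left]
      have e1 : M (ovr S f h₀) (τ k) = M f k := by
        rw [hτk, ← hM.2 f k h₀ hk]
      have e2 : N (τ k) (ovr S g h₀) = N k g := by
        have hkg : ∀ u ∉ S, k u = g u := fun u hu => (hk u hu).symm.trans (hfg u hu)
        rw [hτk, ← hN.2 k g h₀ hkg]
      rw [e1, e2]
    · have z1 : M f k = 0 := hM.1 f k hk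
      have z2 : M (ovr S f h₀) (τ k) = 0 := by
        apply hM.1
        push_neg at hk ⊢
        obtain ⟨u₀, hu₀, hne⟩ := hk
        refine ⟨u₀, hu₀, ?_⟩
        rw [hτ k u₀]
        unfold ovr
        rw [if_neg hu₀, if_neg hu₀]
        intro hcon
        have h2 := congrArg (Equiv.swap (f u₀) (h₀ u₀)) hcon
        rw [Equiv.swap_apply_right, Equiv.swap_apply_self] at h2
        exact hne h2
      rw [z1, z2, zero_mul, zero_mul]

lemma commute_of_disjoint (hST : Disjoint S T) (hM : SuppOn S M) (hN : SuppOn T N) :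
    M * N = N * M := by
  ext f g
  rw [Matrix.mul_apply, Matrix.mul_apply]
  have hDisj : ∀ u, u ∈ S → u ∉ T := fun u hu => Finset.disjoint_left.mp hST hu
  set k₁ : GlobalIdx d L := fun u => if u ∈ S then g u else f u with hk₁
  set k₂ : GlobalIdx d L := fun u => if u ∈ T then g u else f u with hk₂
  have hL1 : ∑ k, M f k * N k g = M f k₁ * N k₁ g := by
    apply Finset.sum_eq_single_of_mem k₁ (Finset.mem_univ _)
    intro k _ hkne
    by_cases c1 : ∀ u ∉ S, f u = k u
    · by_cases c2 : ∀ u ∉ T, k u = g u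
      · exfalso
        apply hkne
        funext u
        by_cases hu : u ∈ S
        · rw [hk₁]; simp only [if_pos hu]
          exact c2 u (hDisj u hu)
        · rw [hk₁]; simp only [if_neg hu]
          exact (c1 u hu).symm
      · rw [hN.1 k g c2, mul_zero]
    · rw [hM.1 f k c1, zero_mul]
  have hL2 : ∑ k, N f k * M k g = N f k₂ * M k₂ g := by
    apply Finset.sum_eq_single_of_mem k₂ (Finset.mem_univ _)
    intro k _ hkne
    by_cases c1 : ∀ u ∉ T, f u = k u
    · by_cases c2 : ∀ u ∉ S, k u = g u
      · exfalso
        apply hkne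
        funext u
        by_cases hu : u ∈ T
        · rw [hk₂]; simp only [if_pos hu]
          exact c2 u (Finset.disjoint_right.mp hST hu)
        · rw [hk₂]; simp only [if_neg hu]
          exact (c1 u hu).symm
      · rw [hM.1 k g c2, mul_zero]
    · rw [hN.1 f k c1, zero_mul]
  rw [hL1, hL2]
  by_cases hc : ∀ u, u ∉ S → u ∉ T → f u = g u
  · have eM : M f k₁ = M k₂ g := by
      have i1 := hM.2 f k₁ f (by
        intro u hu
        rw [hk₁]; simp only [if_neg hu])
      have i2 := hM.2 k₂ g f (by
        intro u hu
        rw [hk₂]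
        by_cases hT : u ∈ T
        · simp only [if_pos hT]
        · simp only [if_neg hT]; exact hc u hu hT)
      rw [i1, i2]
      congr 1
      · funext u
        unfold ovr
        by_cases hu : u ∈ S
        · rw [if_pos hu, if_pos hu, hk₂]
          simp only [if_neg (hDisj u hu)]
        · rw [if_neg hu, if_neg hu]
      · funext u
        unfold ovr
        by_cases hu : u ∈ S
        · rw [if_pos hu, if_pos hu, hk₁]
          simp only [if_pos hu]
        · rw [if_neg hu, if_neg hu]
    have eN : N k₁ g = N f k₂ := by
      have i1 := hN.2 k₁ g f (by
        intro u hu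
        rw [hk₁]
        by_cases hS : u ∈ S
        · simp only [if_pos hS]
        · simp only [if_neg hS]; exact hc u hS hu)
      have i2 := hN.2 f k₂ f (by
        intro u hu
        rw [hk₂]; simp only [if_neg hu])
      rw [i1, i2]
      congr 1
      · funext u
        unfold ovr
        by_cases hu : u ∈ T
        · rw [if_pos hu, if_pos hu, hk₁]
          simp only [if_neg (Finset.disjoint_right.mp hST hu)]
        · rw [if_neg hu, if_neg hu]
      · funext u
        unfold ovr
        by_cases hu : u ∈ T
        · rw [if_pos hu, if_pos hu, hk₂]
          simp only [if_pos hu]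
        · rw [if_neg hu, if_neg hu]
    rw [eM, eN]
    ring
  · push_neg at hc
    obtain ⟨u₀, hu₀S, hu₀T, hne⟩ := hc
    have zN : N k₁ g = 0 := by
      apply hN.1
      push_neg
      exact ⟨u₀, hu₀T, by rw [hk₁]; simp only [if_neg hu₀S]; exact hne⟩
    have zM : M k₂ g = 0 := by
      apply hM.1
      push_neg
      exact ⟨u₀, hu₀S, by rw [hk₂]; simp only [if_neg hu₀T]; exact hne⟩
    rw [zN, zM, mul_zero, mul_zero]

lemma diag_congr (hM : SuppOn T M) {f f' : GlobalIdx d L}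
    (hff : ∀ u ∈ T, f u = f' u) : M f f = M f' f' := by
  have := hM.2 f f f' (fun _ _ => rfl)
  rw [this]
  congr 1 <;>
  · funext u
    unfold ovr
    by_cases hu : u ∈ T
    · rw [if_pos hu]; exact hff u hu
    · rw [if_neg hu]

end SuppOn
end Supp
section Plaq
open Finset
variable {d L : ℕ} [NeZero L]

/-- The plaquette at anchor `w`. -/
def plaqF (w : Site L) : Finset (Site L) :=
  {w, w + (1, 0), w + (0, 1), w + (1, 1)}

lemma mem_plaqF {w z : Site L} :
    z ∈ plaqF w ↔ z = w ∨ z = w + (1, 0) ∨ z = w + (0, 1) ∨ z = w + (1, 1) := by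
  simp [plaqF]

lemma one_ne_zero_zmod (hL2 : 2 ≤ L) : (1 : ZMod L) ≠ 0 := by
  intro h
  have h1 := ZMod.val_cast_of_lt (n := L) (a := 1) (by omega)
  rw [Nat.cast_one, h, ZMod.val_zero] at h1
  exact absurd h1 (by omega)

lemma site_add_cancel {x : Site L} {v w : Site L} (h : x + v = x + w) : v = w :=
  add_left_cancel h

lemma plaq_distinct (hL2 : 2 ≤ L) (x : Site L) :
    x + (1, 0) ≠ x ∧ x + (0, 1) ≠ x ∧ x + (1, 1) ≠ x ∧
    x + (0, 1) ≠ x + (1, 0) ∧ x + (1, 1) ≠ x + (1, 0) ∧ x + (1, 1) ≠ x + (0, 1) := by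
  have h1 := one_ne_zero_zmod (L := L) hL2
  refine ⟨?_, ?_, ?_, ?_, ?_, ?_⟩ <;> intro h
  · exact h1 (congrArg Prod.fst (site_add_cancel (h.trans (add_zero x).symm)))
  · exact h1 (congrArg Prod.snd (site_add_cancel (h.trans (add_zero x).symm)))
  · exact h1 (congrArg Prod.fst (site_add_cancel (h.trans (add_zero x).symm)))
  · exact h1 (congrArg Prod.fst (site_add_cancel h)).symm
  · exact h1 (congrArg Prod.snd (site_add_cancel h))
  · exact h1 (congrArg Prod.fst (site_add_cancel h))

/-- Condition that `f` and `g` agree off the plaquette at `x`, stated as in `plaqOp`. -/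
abbrev offP (x : Site L) (f g : GlobalIdx d L) : Prop :=
  ∀ u : Site L, u ≠ x → u ≠ x + (1, 0) → u ≠ x + (0, 1) → u ≠ x + (1, 1) → f u = g u

lemma offP_iff {x : Site L} {f g : GlobalIdx d L} :
    offP x f g ↔ ∀ u ∉ plaqF x, f u = g u := by
  constructor
  · intro h u hu
    rw [mem_plaqF] at hu
    push_neg at hu
    exact h u hu.1 hu.2.1 hu.2.2.1 hu.2.2.2
  · intro h u h1 h2 h3 h4
    exact h u (by rw [mem_plaqF]; push_neg; exact ⟨h1, h2, h3, h4⟩)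

lemma plaqOp_pos (U : Matrix (FourIdx d) (FourIdx d) ℂ) (x : Site L)
    {f g : GlobalIdx d L} (h : offP x f g) :
    plaqOp U x f g = U (f x, f (x + (1, 0)), f (x + (0, 1)), f (x + (1, 1)))
      (g x, g (x + (1, 0)), g (x + (0, 1)), g (x + (1, 1))) := by
  simp only [plaqOp, Matrix.of_apply]
  rw [if_pos h]

lemma plaqOp_neg (U : Matrix (FourIdx d) (FourIdx d) ℂ) (x : Site L)
    {f g : GlobalIdx d L} (h : ¬ offP x f g) : plaqOp U x f g = 0 := by
  simp only [plaqOp, Matrix.of_apply]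
  rw [if_neg h]

/-- Update the four legs at the plaquette of `x`. -/
def upd4 (x : Site L) (f : GlobalIdx d L) (q : FourIdx d) : GlobalIdx d L :=
  fun u => if u = x then q.1 else if u = x + (1, 0) then q.2.1
    else if u = x + (0, 1) then q.2.2.1 else if u = x + (1, 1) then q.2.2.2 else f u

lemma upd4_legs (hL2 : 2 ≤ L) (x : Site L) (f : GlobalIdx d L) (q : FourIdx d) :
    upd4 x f q x = q.1 ∧ upd4 x f q (x + (1, 0)) = q.2.1 ∧
    upd4 x f q (x + (0, 1)) = q.2.2.1 ∧ upd4 x f q (x + (1, 1)) = q.2.2.2 := by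
  obtain ⟨d1, d2, d3, d4, d5, d6⟩ := plaq_distinct hL2 x
  refine ⟨?_, ?_, ?_, ?_⟩ <;> unfold upd4
  · rw [if_pos rfl]
  · rw [if_neg d1, if_pos rfl]
  · rw [if_neg d2, if_neg d4, if_pos rfl]
  · rw [if_neg d3, if_neg d5, if_neg d6, if_pos rfl]

lemma upd4_off (x : Site L) (f : GlobalIdx d L) (q : FourIdx d) {u : Site L}
    (h1 : u ≠ x) (h2 : u ≠ x + (1, 0)) (h3 : u ≠ x + (0, 1)) (h4 : u ≠ x + (1, 1)) :
    upd4 x f q u = f u := by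
  unfold upd4
  rw [if_neg h1, if_neg h2, if_neg h3, if_neg h4]

lemma sum_agree (hL2 : 2 ≤ L) (x : Site L) (f : GlobalIdx d L) (F : GlobalIdx d L → ℂ)
    (hF : ∀ h, ¬ offP x f h → F h = 0) :
    ∑ h : GlobalIdx d L, F h = ∑ q : FourIdx d, F (upd4 x f q) := by
  obtain ⟨d1, d2, d3, d4, d5, d6⟩ := plaq_distinct hL2 x
  classical
  have key : ∀ h : GlobalIdx d L, offP x f h →
      upd4 x f (h x, h (x + (1, 0)), h (x + (0, 1)), h (x + (1, 1))) = h := by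
    intro h hh
    funext u
    by_cases h1 : u = x
    · subst h1; unfold upd4; rw [if_pos rfl]
    by_cases h2 : u = x + (1, 0)
    · subst h2; unfold upd4; rw [if_neg d1, if_pos rfl]
    by_cases h3 : u = x + (0, 1)
    · subst h3; unfold upd4; rw [if_neg d2, if_neg d4, if_pos rfl]
    by_cases h4 : u = x + (1, 1)
    · subst h4; unfold upd4; rw [if_neg d3, if_neg d5, if_neg d6, if_pos rfl]
    · rw [upd4_off x f _ h1 h2 h3 h4]
      exact hh u h1 h2 h3 h4
  rw [show (Finset.univ : Finset (GlobalIdx d L)) =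
      Finset.univ.filter (fun h => offP x f h) ∪
      Finset.univ.filter (fun h => ¬ offP x f h) from by
    rw [Finset.filter_union_filter_not_eq]]
  rw [Finset.sum_union (Finset.disjoint_filter_filter_not _ _ _)]
  rw [Finset.sum_eq_zero (fun h hh => hF h (Finset.mem_filter.mp hh).2), add_zero]
  apply Finset.sum_nbij' (i := fun h => (h x, h (x + (1, 0)), h (x + (0, 1)), h (x + (1, 1))))
    (j := fun q => upd4 x f q)
  · intro h _
    exact Finset.mem_univ _
  · intro q _
    rw [Finset.mem_filter]
    refine ⟨Finset.mem_univ _, ?_⟩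
    intro u h1 h2 h3 h4
    exact (upd4_off x f q h1 h2 h3 h4).symm
  · intro h hh
    exact key h (Finset.mem_filter.mp hh).2
  · intro q _
    obtain ⟨e1, e2, e3, e4⟩ := upd4_legs hL2 x f q
    rw [e1, e2, e3, e4]
  · intro h hh
    rw [key h (Finset.mem_filter.mp hh).2]

lemma plaqOp_mul (hL2 : 2 ≤ L) (A B : Matrix (FourIdx d) (FourIdx d) ℂ) (x : Site L) :
    plaqOp A x * plaqOp B x = plaqOp (A * B) x := by
  ext f g
  rw [Matrix.mul_apply]
  by_cases hfg : offP x f g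
  · rw [plaqOp_pos _ _ hfg, Matrix.mul_apply]
    rw [sum_agree hL2 x f (fun h => plaqOp A x f h * plaqOp B x h g)
      (fun h hh => by
        show plaqOp A x f h * plaqOp B x h g = 0
        rw [plaqOp_neg _ _ hh, zero_mul])]
    apply Finset.sum_congr rfl
    intro q _
    obtain ⟨e1, e2, e3, e4⟩ := upd4_legs hL2 x f q
    have c1 : offP x f (upd4 x f q) := fun u h1 h2 h3 h4 => (upd4_off x f q h1 h2 h3 h4).symm
    have c2 : offP x (upd4 x f q) g := fun u h1 h2 h3 h4 =>
      (upd4_off x f q h1 h2 h3 h4).trans (hfg u h1 h2 h3 h4)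
    rw [plaqOp_pos _ _ c1, plaqOp_pos _ _ c2, e1, e2, e3, e4]
  · rw [plaqOp_neg _ _ hfg]
    apply Finset.sum_eq_zero
    intro k _
    by_cases c1 : offP x f k
    · have c2 : ¬ offP x k g := fun c2 =>
        hfg (fun u h1 h2 h3 h4 => (c1 u h1 h2 h3 h4).trans (c2 u h1 h2 h3 h4))
      rw [plaqOp_neg _ _ c2, mul_zero]
    · rw [plaqOp_neg _ _ c1, zero_mul]

lemma plaqOp_one (hL2 : 2 ≤ L) (x : Site L) :
    plaqOp (1 : Matrix (FourIdx d) (FourIdx d) ℂ) x = 1 := by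
  ext f g
  rw [Matrix.one_apply]
  by_cases hfg : f = g
  · subst hfg
    rw [plaqOp_pos _ _ (fun u _ _ _ _ => rfl), if_pos rfl, Matrix.one_apply_eq]
  · rw [if_neg hfg]
    by_cases hc : offP x f g
    · rw [plaqOp_pos _ _ hc, Matrix.one_apply]
      rw [if_neg]
      intro hlegs
      apply hfg
      simp only [Prod.mk.injEq] at hlegs
      funext u
      by_cases h1 : u = x
      · subst h1; exact hlegs.1
      by_cases h2 : u = x + (1, 0)
      · subst h2; exact hlegs.2.1
      by_cases h3 : u = x + (0, 1)
      · subst h3; exact hlegs.2.2.1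
      by_cases h4 : u = x + (1, 1)
      · subst h4; exact hlegs.2.2.2
      · exact hc u h1 h2 h3 h4
    · rw [plaqOp_neg _ _ hc]

lemma plaqOp_conjT (U : Matrix (FourIdx d) (FourIdx d) ℂ) (x : Site L) :
    (plaqOp U x)ᴴ = plaqOp Uᴴ x := by
  ext f g
  rw [Matrix.conjTranspose_apply]
  by_cases h : offP x f g
  · have h' : offP x g f := fun u h1 h2 h3 h4 => (h u h1 h2 h3 h4).symm
    rw [plaqOp_pos _ _ h, plaqOp_pos _ _ h', Matrix.conjTranspose_apply]
  · have h' : ¬ offP x g f := fun h' =>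
      h (fun u h1 h2 h3 h4 => (h' u h1 h2 h3 h4).symm)
    rw [plaqOp_neg _ _ h, plaqOp_neg _ _ h', star_zero]

lemma plaqOp_unitary (hL2 : 2 ≤ L) {U : Matrix (FourIdx d) (FourIdx d) ℂ}
    (hU : IsUnitary U) (x : Site L) : IsUnitary (plaqOp U x) := by
  constructor
  · rw [plaqOp_conjT, plaqOp_mul hL2, hU.1, plaqOp_one hL2]
  · rw [plaqOp_conjT, plaqOp_mul hL2, hU.2, plaqOp_one hL2]

lemma suppOn_plaqOp (U : Matrix (FourIdx d) (FourIdx d) ℂ) (x : Site L) :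
    SuppOn (plaqF x) (plaqOp U x) := by
  constructor
  · intro f g hfg
    exact plaqOp_neg _ _ (fun hc => hfg (offP_iff.mp hc))
  · intro f g h hfg
    have hc : offP x f g := offP_iff.mpr hfg
    have hmem : x ∈ plaqF x ∧ x + (1, 0) ∈ plaqF x ∧ x + (0, 1) ∈ plaqF x ∧
        x + (1, 1) ∈ plaqF x := by
      refine ⟨?_, ?_, ?_, ?_⟩ <;> rw [mem_plaqF] <;> tauto
    have hc' : offP x (ovr (plaqF x) f h) (ovr (plaqF x) g h) := by
      apply offP_iff.mpr
      intro u hu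
      unfold ovr
      rw [if_neg hu, if_neg hu]
    rw [plaqOp_pos _ _ hc, plaqOp_pos _ _ hc']
    unfold ovr
    rw [if_pos hmem.1, if_pos hmem.2.1, if_pos hmem.2.2.1, if_pos hmem.2.2.2,
      if_pos hmem.1, if_pos hmem.2.1, if_pos hmem.2.2.1, if_pos hmem.2.2.2]

lemma suppOn_siteOpG (a : Matrix (Fin d) (Fin d) ℂ) (x : Site L) :
    SuppOn {x} (siteOpG a x) := by
  constructor
  · intro f g hfg
    have : ¬ ∀ u : Site L, u ≠ x → f u = g u := by
      intro h
      exact hfg (fun u hu => h u (by simpa using hu))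
    show (if ∀ u : Site L, u ≠ x → f u = g u then (1:ℂ) else 0) * a (f x) (g x) = 0
    rw [if_neg this, zero_mul]
  · intro f g h hfg
    have hc : ∀ u : Site L, u ≠ x → f u = g u := fun u hu =>
      hfg u (by simpa using hu)
    have hx : x ∈ ({x} : Finset (Site L)) := Finset.mem_singleton_self x
    show (if ∀ u : Site L, u ≠ x → f u = g u then (1:ℂ) else 0) * a (f x) (g x) =
      (if ∀ u : Site L, u ≠ x → ovr {x} f h u = ovr {x} g h u then (1:ℂ) else 0) *
        a (ovr {x} f h x) (ovr {x} g h x)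
    have hc' : ∀ u : Site L, u ≠ x → ovr {x} f h u = ovr {x} g h u := by
      intro u hu
      unfold ovr
      rw [if_neg (by simpa using hu), if_neg (by simpa using hu)]
    rw [if_pos hc, if_pos hc']
    unfold ovr
    rw [if_pos hx, if_pos hx]

end Plaq
section Layers
open Finset
variable {d L : ℕ} [NeZero L]

lemma IsUnitary.one {n : Type*} [Fintype n] [DecidableEq n] :
    IsUnitary (1 : Matrix n n ℂ) := by
  constructor <;> simp

lemma IsUnitary.mul' {n : Type*} [Fintype n] [DecidableEq n]
    {M N : Matrix n n ℂ} (hM : IsUnitary M) (hN : IsUnitary N) : IsUnitary (M * N) := by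
  constructor
  · rw [Matrix.conjTranspose_mul, show M * N * (Nᴴ * Mᴴ) = M * (N * Nᴴ) * Mᴴ by
      simp only [Matrix.mul_assoc], hN.1, Matrix.mul_one, hM.1]
  · rw [Matrix.conjTranspose_mul, show Nᴴ * Mᴴ * (M * N) = Nᴴ * (Mᴴ * M) * N by
      simp only [Matrix.mul_assoc], hM.2, Matrix.mul_one, hN.2]

lemma isUnitary_list_prod {n : Type*} [Fintype n] [DecidableEq n]
    (l : List (Matrix n n ℂ)) (h : ∀ M ∈ l, IsUnitary M) : IsUnitary l.prod := by
  induction l with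
  | nil => exact IsUnitary.one
  | cons M l ih =>
    rw [List.prod_cons]
    exact IsUnitary.mul' (h M List.mem_cons_self)
      (ih (fun N hN => h N (List.mem_cons_of_mem _ hN)))

lemma conj_list (hL2 : 2 ≤ L) {U : Matrix (FourIdx d) (FourIdx d) ℂ} (hU : IsUnitary U) :
    ∀ (l : List (Site L)),
      (∀ w ∈ l, ∀ w' ∈ l, plaqF w = plaqF w' ∨ Disjoint (plaqF w) (plaqF w')) →
      ∀ (S : Finset (Site L)) (B : Matrix (GlobalIdx d L) (GlobalIdx d L) ℂ),
      SuppOn S B →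
      SuppOn (S ∪ (l.toFinset.filter fun w => ¬ Disjoint (plaqF w) S).biUnion plaqF)
        (((l.map (plaqOp U)).prod)ᴴ * B * (l.map (plaqOp U)).prod) := by
  intro l
  induction l with
  | nil =>
    intro _ S B hB
    simpa using hB
  | cons w l ih =>
    intro hl S B hB
    have hG : IsUnitary (plaqOp U w) := plaqOp_unitary hL2 hU w
    rw [List.map_cons, List.prod_cons, Matrix.conjTranspose_mul]
    have hrw : ((l.map (plaqOp U)).prod)ᴴ * (plaqOp U w)ᴴ * B * (plaqOp U w * (l.map (plaqOp U)).prod)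
        = ((l.map (plaqOp U)).prod)ᴴ * ((plaqOp U w)ᴴ * B * plaqOp U w) * (l.map (plaqOp U)).prod := by
      simp only [Matrix.mul_assoc]
    rw [hrw]
    by_cases hw : Disjoint (plaqF w) S
    · -- the head gate commutes with B and cancels
      have hcomm : (plaqOp U w)ᴴ * B * plaqOp U w = B := by
        have h1 : (plaqOp U w)ᴴ * B = B * (plaqOp U w)ᴴ :=
          ((SuppOn.commute_of_disjoint hw.symm hB ((suppOn_plaqOp U w).conjT)).symm)
        rw [h1, Matrix.mul_assoc, hG.2, Matrix.mul_one]
      rw [hcomm]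
      have := ih (fun a ha b hb => hl a (List.mem_cons_of_mem _ ha) b (List.mem_cons_of_mem _ hb)) S B hB
      apply this.mono
      apply Finset.union_subset_union_right
      apply Finset.biUnion_subset_biUnion_of_subset_left
      apply Finset.filter_subset_filter
      intro z hz
      simp only [List.toFinset_cons, Finset.mem_insert]
      exact Or.inr hz
    · -- the head gate touches `S`
      have hB' : SuppOn (S ∪ plaqF w) ((plaqOp U w)ᴴ * B * plaqOp U w) := by
        have s1 : SuppOn (S ∪ plaqF w) B := hB.mono Finset.subset_union_left
        have s2 : SuppOn (S ∪ plaqF w) (plaqOp U w) :=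
          (suppOn_plaqOp U w).mono Finset.subset_union_right
        exact (s2.conjT.mul s1).mul s2
      have := ih (fun a ha b hb => hl a (List.mem_cons_of_mem _ ha) b (List.mem_cons_of_mem _ hb))
        (S ∪ plaqF w) _ hB'
      apply this.mono
      intro z hz
      rw [Finset.mem_union] at hz
      have hwmem : w ∈ (w :: l).toFinset.filter fun v => ¬ Disjoint (plaqF v) S := by
        rw [Finset.mem_filter]
        exact ⟨by simp, hw⟩
      rcases hz with hz | hz
      · rw [Finset.mem_union] at hz
        rcases hz with hz | hz
        · exact Finset.mem_union_left _ hz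
        · exact Finset.mem_union_right _ (Finset.mem_biUnion.mpr ⟨w, hwmem, hz⟩)
      · rw [Finset.mem_biUnion] at hz
        obtain ⟨v, hv, hzv⟩ := hz
        rw [Finset.mem_filter, List.mem_toFinset] at hv
        obtain ⟨hvl, hvtouch⟩ := hv
        by_cases hvS : Disjoint (plaqF v) S
        · -- v's plaquette touches S ∪ plaqF w but not S, so it meets plaqF w
          have hvw : ¬ Disjoint (plaqF v) (plaqF w) := by
            intro hd
            apply hvtouch
            rw [Finset.disjoint_union_right]
            exact ⟨hvS, hd⟩
          have := hl w List.mem_cons_self v (List.mem_cons_of_mem _ hvl)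
          rcases this with heq | hdisj
          · rw [← heq] at hzv
            exact Finset.mem_union_right _ (Finset.mem_biUnion.mpr ⟨w, hwmem, hzv⟩)
          · exact absurd hdisj.symm hvw
        · refine Finset.mem_union_right _ (Finset.mem_biUnion.mpr ⟨v, ?_, hzv⟩)
          rw [Finset.mem_filter, List.mem_toFinset]
          exact ⟨List.mem_cons_of_mem _ hvl, hvS⟩
section Anchors
open Finset
variable {d L : ℕ} [NeZero L]

/-- The anchors of the even layer. -/
def evenAnchors (L : ℕ) : List (Site L) :=
  (List.range (L / 2)).flatMap fun i => (List.range (L / 2)).map fun j =>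
    (((2 * i : ℕ) : ZMod L), ((2 * j : ℕ) : ZMod L))

/-- The anchors of the odd layer. -/
def oddAnchors (L : ℕ) : List (Site L) :=
  (List.range (L / 2)).flatMap fun i => (List.range (L / 2)).map fun j =>
    (((2 * i + 1 : ℕ) : ZMod L), ((2 * j + 1 : ℕ) : ZMod L))

lemma Uee_eq (U : Matrix (FourIdx d) (FourIdx d) ℂ) :
    Uee d L U = ((evenAnchors L).map (plaqOp U)).prod := by
  rw [Uee, evenAnchors, List.map_flatMap]
  congr 1
  apply List.flatMap_congr
  intro i _
  rw [List.map_map]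
  rfl

lemma Uoo_eq (U : Matrix (FourIdx d) (FourIdx d) ℂ) :
    Uoo d L U = ((oddAnchors L).map (plaqOp U)).prod := by
  rw [Uoo, oddAnchors, List.map_flatMap]
  congr 1
  apply List.flatMap_congr
  intro i _
  rw [List.map_map]
  rfl

lemma mem_evenAnchors {w : Site L} :
    w ∈ evenAnchors L ↔ ∃ i < L / 2, ∃ j < L / 2,
      w = (((2 * i : ℕ) : ZMod L), ((2 * j : ℕ) : ZMod L)) := by
  simp only [evenAnchors, List.mem_flatMap, List.mem_map, List.mem_range]
  constructor
  · rintro ⟨i, hi, j, hj, rfl⟩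
    exact ⟨i, hi, j, hj, rfl⟩
  · rintro ⟨i, hi, j, hj, rfl⟩
    exact ⟨i, hi, j, hj, rfl⟩

lemma mem_oddAnchors {w : Site L} :
    w ∈ oddAnchors L ↔ ∃ i < L / 2, ∃ j < L / 2,
      w = (((2 * i + 1 : ℕ) : ZMod L), ((2 * j + 1 : ℕ) : ZMod L)) := by
  simp only [oddAnchors, List.mem_flatMap, List.mem_map, List.mem_range]
  constructor
  · rintro ⟨i, hi, j, hj, rfl⟩
    exact ⟨i, hi, j, hj, rfl⟩
  · rintro ⟨i, hi, j, hj, rfl⟩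
    exact ⟨i, hi, j, hj, rfl⟩

end Anchors
section Geometry
open Finset
variable {d L : ℕ} [NeZero L]

lemma cast_add_one (a : ℕ) : ((a : ZMod L) + 1) = ((a + 1 : ℕ) : ZMod L) := by
  push_cast
  ring

lemma coord_val_even (hL : Even L) {i : ℕ} (hi : i < L / 2) {c : ZMod L}
    (hc : c = ((2 * i : ℕ) : ZMod L) ∨ c = ((2 * i : ℕ) : ZMod L) + 1) :
    c.val = 2 * i ∨ c.val = 2 * i + 1 := by
  obtain ⟨K, hK⟩ := hL
  rcases hc with rfl | rfl
  · left
    exact ZMod.val_cast_of_lt (by omega)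
  · right
    rw [cast_add_one]
    exact ZMod.val_cast_of_lt (by omega)

lemma coord_val_odd (hL : Even L) {i : ℕ} (hi : i < L / 2) {c : ZMod L}
    (hc : c = ((2 * i + 1 : ℕ) : ZMod L) ∨ c = ((2 * i + 1 : ℕ) : ZMod L) + 1) :
    c.val = 2 * i + 1 ∨ (c.val = 2 * i + 2 ∧ 2 * i + 2 < L) ∨
      (c.val = 0 ∧ 2 * i + 2 = L) := by
  obtain ⟨K, hK⟩ := hL
  rcases hc with rfl | rfl
  · left
    exact ZMod.val_cast_of_lt (by omega)
  · rw [cast_add_one]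
    have hle : 2 * i + 2 ≤ L := by omega
    rcases lt_or_eq_of_le hle with hlt | heq
    · right; left
      exact ⟨ZMod.val_cast_of_lt (by omega), hlt⟩
    · right; right
      refine ⟨?_, heq⟩
      rw [show ((2 * i + 1 + 1 : ℕ) : ZMod L) = ((L : ℕ) : ZMod L) from by
        rw [show 2 * i + 1 + 1 = L from by omega],
        ZMod.natCast_self, ZMod.val_zero]

lemma mem_plaq_coords {w z : Site L} (hz : z ∈ plaqF w) :
    (z.1 = w.1 ∨ z.1 = w.1 + 1) ∧ (z.2 = w.2 ∨ z.2 = w.2 + 1) := by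
  rcases mem_plaqF.mp hz with rfl | rfl | rfl | rfl <;>
    simp [Prod.fst_add, Prod.snd_add]

lemma even_pairwise (hL : Even L) :
    ∀ w ∈ evenAnchors (L := L), ∀ w' ∈ evenAnchors (L := L),
      plaqF w = plaqF w' ∨ Disjoint (plaqF w) (plaqF w') := by
  intro w hw w' hw'
  obtain ⟨i, hi, j, hj, rfl⟩ := mem_evenAnchors.mp hw
  obtain ⟨i', hi', j', hj', rfl⟩ := mem_evenAnchors.mp hw'
  by_cases hij : i = i' ∧ j = j'
  · left
    rw [hij.1, hij.2]
  · right
    rw [Finset.disjoint_left]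
    intro z hz hz'
    obtain ⟨hz1, hz2⟩ := mem_plaq_coords hz
    obtain ⟨hz1', hz2'⟩ := mem_plaq_coords hz'
    have v1 := coord_val_even hL hi hz1
    have v2 := coord_val_even hL hj hz2
    have v1' := coord_val_even hL hi' hz1'
    have v2' := coord_val_even hL hj' hz2'
    exact hij (by omega)

lemma odd_pairwise (hL : Even L) :
    ∀ w ∈ oddAnchors (L := L), ∀ w' ∈ oddAnchors (L := L),
      plaqF w = plaqF w' ∨ Disjoint (plaqF w) (plaqF w') := by
  intro w hw w' hw'
  obtain ⟨i, hi, j, hj, rfl⟩ := mem_oddAnchors.mp hw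
  obtain ⟨i', hi', j', hj', rfl⟩ := mem_oddAnchors.mp hw'
  by_cases hij : i = i' ∧ j = j'
  · left
    rw [hij.1, hij.2]
  · right
    rw [Finset.disjoint_left]
    intro z hz hz'
    obtain ⟨hz1, hz2⟩ := mem_plaq_coords hz
    obtain ⟨hz1', hz2'⟩ := mem_plaq_coords hz'
    have v1 := coord_val_odd hL hi hz1
    have v2 := coord_val_odd hL hj hz2
    have v1' := coord_val_odd hL hi' hz1'
    have v2' := coord_val_odd hL hj' hz2'
    exact hij (by omega)

/-- The `msite` coordinate map lands on odd-anchor coordinates. -/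
lemma msite_coord (hL : Even L) (hL2 : 2 ≤ L) (c : ZMod L) :
    ∃ i < L / 2, (if Odd c.val then c else c - 1) = ((2 * i + 1 : ℕ) : ZMod L) := by
  obtain ⟨K, hK⟩ := hL
  have hcv : c.val < L := ZMod.val_lt c
  have hcc : ((c.val : ℕ) : ZMod L) = c := ZMod.natCast_rightInverse c
  by_cases hodd : Odd c.val
  · have hmod := Nat.odd_iff.mp hodd
    refine ⟨c.val / 2, by omega, ?_⟩
    rw [if_pos hodd, show (2 * (c.val / 2) + 1 : ℕ) = c.val from by omega]
    exact hcc.symm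
  · have hmod : c.val % 2 = 0 := Nat.even_iff.mp (Nat.not_odd_iff_even.mp hodd)
    rw [if_neg hodd]
    rcases Nat.eq_zero_or_pos c.val with h0 | hpos
    · refine ⟨L / 2 - 1, by omega, ?_⟩
      have hc0 : c = 0 := by rw [← hcc, h0, Nat.cast_zero]
      rw [hc0, show ((2 * (L / 2 - 1) + 1 : ℕ) : ZMod L) = ((L - 1 : ℕ) : ZMod L) from by
        congr 1; omega, Nat.cast_sub (by omega), ZMod.natCast_self, Nat.cast_one, zero_sub]
    · refine ⟨c.val / 2 - 1, by omega, ?_⟩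
      rw [show ((2 * (c.val / 2 - 1) + 1 : ℕ) : ZMod L) = ((c.val - 1 : ℕ) : ZMod L) from by
        congr 1; omega, Nat.cast_sub (by omega), hcc, Nat.cast_one]

lemma msite_repr (hL : Even L) (hL2 : 2 ≤ L) (y : Site L) :
    ∃ i < L / 2, ∃ j < L / 2,
      msite y = (((2 * i + 1 : ℕ) : ZMod L), ((2 * j + 1 : ℕ) : ZMod L)) := by
  obtain ⟨i, hi, h1⟩ := msite_coord hL hL2 y.1
  obtain ⟨j, hj, h2⟩ := msite_coord hL hL2 y.2
  exact ⟨i, hi, j, hj, by rw [msite, h1, h2]⟩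

lemma y_mem_plaq_msite (y : Site L) : y ∈ plaqF (msite y) := by
  rw [mem_plaqF]
  have h1 : y.1 = (msite y).1 ∨ y.1 = (msite y).1 + 1 := by
    rw [msite]
    by_cases h : Odd y.1.val
    · left; rw [if_pos h]
    · right; rw [if_neg h]; ring
  have h2 : y.2 = (msite y).2 ∨ y.2 = (msite y).2 + 1 := by
    rw [msite]
    by_cases h : Odd y.2.val
    · left; rw [if_pos h]
    · right; rw [if_neg h]; ring
  rcases h1 with h1 | h1 <;> rcases h2 with h2 | h2
  · left; rw [Prod.ext_iff]; exact ⟨h1, h2⟩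
  · right; right; left; rw [Prod.ext_iff]
    constructor
    · rw [Prod.fst_add]; simpa using h1
    · rw [Prod.snd_add]; simpa using h2
  · right; left; rw [Prod.ext_iff]
    constructor
    · rw [Prod.fst_add]; simpa using h1
    · rw [Prod.snd_add]; simpa using h2
  · right; right; right; rw [Prod.ext_iff]
    constructor
    · rw [Prod.fst_add]; simpa using h1
    · rw [Prod.snd_add]; simpa using h2

/-- The only odd plaquette meeting the plaquette of `msite y` is that plaquette itself. -/
lemma odd_touch (hL : Even L) (hL2 : 2 ≤ L) {y : Site L} {w : Site L}
    (hw : w ∈ oddAnchors (L := L)) (h : ¬ Disjoint (plaqF w) (plaqF (msite y))) :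
    plaqF w = plaqF (msite y) := by
  obtain ⟨i, hi, j, hj, rfl⟩ := mem_oddAnchors.mp hw
  obtain ⟨i', hi', j', hj', hm⟩ := msite_repr hL hL2 y
  rw [Finset.not_disjoint_iff] at h
  obtain ⟨z, hz, hz'⟩ := h
  rw [hm] at hz' ⊢
  obtain ⟨c1, c2⟩ := mem_plaq_coords hz
  obtain ⟨c1', c2'⟩ := mem_plaq_coords hz'
  have v1 := coord_val_odd hL hi c1
  have v2 := coord_val_odd hL hj c2
  have v1' := coord_val_odd (⟨L/2, by obtain ⟨K,hK⟩ := hL; omega⟩ : Even L) hi' c1'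
  have v2' := coord_val_odd (⟨L/2, by obtain ⟨K,hK⟩ := hL; omega⟩ : Even L) hj' c2'
  have : i = i' ∧ j = j' := by omega
  rw [this.1, this.2]

end Geometry
section Cone
open Finset
variable {d L : ℕ} [NeZero L]

/-- Ball of radius `r` around a finite set of sites. -/
def ballF (P : Finset (Site L)) (r : ℕ) : Finset (Site L) :=
  Finset.univ.filter fun z => ∃ w ∈ P, torusDist w z ≤ r

lemma mem_ballF {P : Finset (Site L)} {r : ℕ} {z : Site L} :
    z ∈ ballF P r ↔ ∃ w ∈ P, torusDist w z ≤ r := by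
  simp [ballF]

lemma subset_ballF (P : Finset (Site L)) (r : ℕ) : P ⊆ ballF P r := by
  intro z hz
  rw [mem_ballF]
  exact ⟨z, hz, by rw [torusDist_self]; omega⟩

lemma ballF_ballF (P : Finset (Site L)) (r s : ℕ) :
    ballF (ballF P r) s ⊆ ballF P (r + s) := by
  intro z hz
  rw [mem_ballF] at hz
  obtain ⟨w, hw, hwz⟩ := hz
  rw [mem_ballF] at hw ⊢
  obtain ⟨v, hv, hvw⟩ := hw
  exact ⟨v, hv, le_trans (torusDist_triangle v w z) (by omega)⟩

lemma cdist_cases {a b c : ZMod L} (ha : a = c ∨ a = c + 1) (hb : b = c ∨ b = c + 1) :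
    cdist a b ≤ 1 := by
  rcases ha with rfl | rfl <;> rcases hb with rfl | rfl
  · rw [cdist_self]; omega
  · exact cdist_add_one_le _
  · rw [cdist_comm]; exact cdist_add_one_le _
  · rw [cdist_self]; omega

lemma plaq_diam {w z z' : Site L} (hz : z ∈ plaqF w) (hz' : z' ∈ plaqF w) :
    torusDist z z' ≤ 1 := by
  obtain ⟨h1, h2⟩ := mem_plaq_coords hz
  obtain ⟨h1', h2'⟩ := mem_plaq_coords hz'
  exact max_le (cdist_cases h1 h1') (cdist_cases h2 h2')

lemma conj_even (hL : Even L) (hL2 : 2 ≤ L) {U : Matrix (FourIdx d) (FourIdx d) ℂ}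
    (hU : IsUnitary U) {S : Finset (Site L)} {B : Matrix (GlobalIdx d L) (GlobalIdx d L) ℂ}
    (hB : SuppOn S B) : SuppOn (ballF S 1) ((Uee d L U)ᴴ * B * Uee d L U) := by
  rw [Uee_eq]
  apply (conj_list hL2 hU (evenAnchors L) (even_pairwise hL) S B hB).mono
  apply Finset.union_subset (subset_ballF S 1)
  intro z hz
  rw [Finset.mem_biUnion] at hz
  obtain ⟨w, hw, hzw⟩ := hz
  rw [Finset.mem_filter] at hw
  rw [Finset.not_disjoint_iff] at hw
  obtain ⟨w₀, hw₀p, hw₀S⟩ := hw.2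
  rw [mem_ballF]
  exact ⟨w₀, hw₀S, plaq_diam hw₀p hzw⟩

lemma conj_odd (hL : Even L) (hL2 : 2 ≤ L) {U : Matrix (FourIdx d) (FourIdx d) ℂ}
    (hU : IsUnitary U) {S : Finset (Site L)} {B : Matrix (GlobalIdx d L) (GlobalIdx d L) ℂ}
    (hB : SuppOn S B) : SuppOn (ballF S 1) ((Uoo d L U)ᴴ * B * Uoo d L U) := by
  rw [Uoo_eq]
  apply (conj_list hL2 hU (oddAnchors L) (odd_pairwise hL) S B hB).mono
  apply Finset.union_subset (subset_ballF S 1)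
  intro z hz
  rw [Finset.mem_biUnion] at hz
  obtain ⟨w, hw, hzw⟩ := hz
  rw [Finset.mem_filter] at hw
  rw [Finset.not_disjoint_iff] at hw
  obtain ⟨w₀, hw₀p, hw₀S⟩ := hw.2
  rw [mem_ballF]
  exact ⟨w₀, hw₀S, plaq_diam hw₀p hzw⟩

lemma conj_odd_msite (hL : Even L) (hL2 : 2 ≤ L) {U : Matrix (FourIdx d) (FourIdx d) ℂ}
    (hU : IsUnitary U) {y : Site L} {B : Matrix (GlobalIdx d L) (GlobalIdx d L) ℂ}
    (hB : SuppOn (plaqF (msite y)) B) :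
    SuppOn (plaqF (msite y)) ((Uoo d L U)ᴴ * B * Uoo d L U) := by
  rw [Uoo_eq]
  apply (conj_list hL2 hU (oddAnchors L) (odd_pairwise hL) _ B hB).mono
  apply Finset.union_subset (Finset.Subset.refl _)
  intro z hz
  rw [Finset.mem_biUnion] at hz
  obtain ⟨w, hw, hzw⟩ := hz
  rw [Finset.mem_filter, List.mem_toFinset] at hw
  rw [← odd_touch hL hL2 hw.1 hw.2]
  exact hzw

lemma conj_step (hL : Even L) (hL2 : 2 ≤ L) {U : Matrix (FourIdx d) (FourIdx d) ℂ}
    (hU : IsUnitary U) {S : Finset (Site L)} {B : Matrix (GlobalIdx d L) (GlobalIdx d L) ℂ}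
    (hB : SuppOn S B) :
    SuppOn (ballF S 2) ((Ustep d L U)ᴴ * B * Ustep d L U) := by
  have hrw : (Ustep d L U)ᴴ * B * Ustep d L U =
      (Uee d L U)ᴴ * ((Uoo d L U)ᴴ * B * Uoo d L U) * Uee d L U := by
    rw [Ustep, Matrix.conjTranspose_mul]
    simp only [Matrix.mul_assoc]
  rw [hrw]
  have h1 := conj_odd hL hL2 hU hB
  have h2 := conj_even hL hL2 hU h1
  apply h2.mono
  exact ballF_ballF S 1 1

set_option maxHeartbeats 1000000 in
lemma main_supp (hL : Even L) (hL2 : 2 ≤ L) {U : Matrix (FourIdx d) (FourIdx d) ℂ}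
    (hU : IsUnitary U) (y : Site L) (b : Matrix (Fin d) (Fin d) ℂ) (n : ℕ) :
    SuppOn (ballF (plaqF (msite y)) (2 * n + 1))
      (((Ustep d L U)ᴴ) ^ (n + 1) * siteOpG b y * (Ustep d L U) ^ (n + 1)) := by
  induction n with
  | zero =>
    rw [pow_one, pow_one]
    have hb : SuppOn (plaqF (msite y)) (siteOpG b y) :=
      (suppOn_siteOpG b y).mono (by
        intro z hz
        rw [Finset.mem_singleton] at hz
        rw [hz]
        exact y_mem_plaq_msite y)
    have hrw : (Ustep d L U)ᴴ * siteOpG b y * Ustep d L U =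
        (Uee d L U)ᴴ * ((Uoo d L U)ᴴ * siteOpG b y * Uoo d L U) * Uee d L U := by
      rw [Ustep, Matrix.conjTranspose_mul]
      simp only [Matrix.mul_assoc]
    rw [hrw]
    have h1 := conj_odd_msite hL hL2 hU hb
    have h2 := conj_even hL hL2 hU h1
    exact h2.mono (by norm_num)
  | succ n ih =>
    have hrw : ((Ustep d L U)ᴴ) ^ (n + 2) * siteOpG b y * (Ustep d L U) ^ (n + 2) =
        (Ustep d L U)ᴴ * ((((Ustep d L U)ᴴ) ^ (n + 1) * siteOpG b y *
          (Ustep d L U) ^ (n + 1))) * Ustep d L U := by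
      rw [pow_succ (Ustep d L U) (n + 1), pow_succ' ((Ustep d L U)ᴴ) (n + 1)]
      simp only [Matrix.mul_assoc]
    rw [hrw]
    have h := conj_step hL hL2 hU ih
    apply h.mono
    have := ballF_ballF (plaqF (msite y)) (2 * n + 1) 2
    rw [show 2 * n + 1 + 2 = 2 * (n + 1) + 1 from by omega] at this
    exact this

end Cone
section Traces
open Finset
variable {d L : ℕ} [NeZero L]

lemma card_fun_ne (y : Site L) :
    Fintype.card ({j : Site L // j ≠ y} → Fin d) = d ^ (L ^ 2 - 1) := by
  rw [Fintype.card_fun, Fintype.card_fin]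
  congr 1
  have := Fintype.card_subtype_compl (fun j : Site L => j = y)
  rw [Fintype.card_subtype_eq] at this
  rw [this, Fintype.card_prod, ZMod.card, sq]

lemma siteOpG_diag (b : Matrix (Fin d) (Fin d) ℂ) (y : Site L) (f : GlobalIdx d L) :
    siteOpG b y f f = b (f y) (f y) := by
  show (if ∀ u : Site L, u ≠ y → f u = f u then (1:ℂ) else 0) * b (f y) (f y) = b (f y) (f y)
  rw [if_pos (fun u _ => rfl), one_mul]

lemma trace_siteOpG (b : Matrix (Fin d) (Fin d) ℂ) (y : Site L) :
    (siteOpG b y).trace = ((d : ℂ) ^ (L ^ 2 - 1)) * b.trace := by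
  classical
  rw [Matrix.trace]
  have h1 : ∀ f : GlobalIdx d L, (siteOpG b y).diag f = b (f y) (f y) :=
    fun f => siteOpG_diag b y f
  rw [Finset.sum_congr rfl (fun f _ => h1 f)]
  set e := Equiv.funSplitAt y (Fin d) with he
  rw [← Equiv.sum_comp e.symm (fun f => b (f y) (f y))]
  have h2 : ∀ p : Fin d × ({j : Site L // j ≠ y} → Fin d), (e.symm p) y = p.1 := by
    intro p
    simp [he, Equiv.funSplitAt, Equiv.piSplitAt]
  rw [Finset.sum_congr rfl (fun p _ => by rw [h2 p])]
  rw [Fintype.sum_prod_type]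
  have h3 : ∀ v : Fin d, ∑ _r : ({j : Site L // j ≠ y} → Fin d), b v v =
      ((d : ℂ) ^ (L ^ 2 - 1)) * b v v := by
    intro v
    rw [Finset.sum_const, Finset.card_univ, card_fun_ne, nsmul_eq_mul]
    push_cast
    ring
  rw [Finset.sum_congr rfl (fun v _ => h3 v), Matrix.trace, ← Finset.mul_sum]
  rfl

lemma trace_site_mul (hd : 1 ≤ d) {T : Finset (Site L)} {x : Site L} (hx : x ∉ T)
    {C : Matrix (GlobalIdx d L) (GlobalIdx d L) ℂ} (hC : SuppOn T C)
    (a : Matrix (Fin d) (Fin d) ℂ) :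
    (d : ℂ) * (siteOpG a x * C).trace = a.trace * C.trace := by
  classical
  have step1 : (siteOpG a x * C).trace = ∑ f : GlobalIdx d L, a (f x) (f x) * C f f := by
    rw [Matrix.trace]
    apply Finset.sum_congr rfl
    intro f _
    show (siteOpG a x * C) f f = _
    rw [Matrix.mul_apply]
    rw [Finset.sum_eq_single_of_mem f (Finset.mem_univ f)]
    · rw [siteOpG_diag]
    · intro h _ hne
      by_cases hc : ∀ u : Site L, u ≠ x → f u = h u
      · have hhx : h x ≠ f x := by
          intro heq
          apply hne
          funext u
          by_cases hu : u = x
          · rw [hu]; exact heq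
          · exact (hc u hu).symm
        have : C h f = 0 := by
          apply hC.1
          push_neg
          exact ⟨x, hx, hhx⟩
        rw [this, mul_zero]
      · show (if ∀ u : Site L, u ≠ x → f u = h u then (1:ℂ) else 0) * a (f x) (h x) * C h f = 0
        rw [if_neg hc, zero_mul, zero_mul]
  rw [step1]
  set e := Equiv.funSplitAt x (Fin d) with he
  have h2 : ∀ p : Fin d × ({j : Site L // j ≠ x} → Fin d), (e.symm p) x = p.1 := by
    intro p
    simp [he, Equiv.funSplitAt, Equiv.piSplitAt]
  have h2' : ∀ (p : Fin d × ({j : Site L // j ≠ x} → Fin d)) (u : Site L) (hu : u ≠ x),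
      (e.symm p) u = p.2 ⟨u, hu⟩ := by
    intro p u hu
    simp [he, Equiv.funSplitAt, Equiv.piSplitAt, hu]
  set v₀ : Fin d := ⟨0, hd⟩ with hv₀
  have hdiag : ∀ (v : Fin d) (r : {j : Site L // j ≠ x} → Fin d),
      C (e.symm (v, r)) (e.symm (v, r)) = C (e.symm (v₀, r)) (e.symm (v₀, r)) := by
    intro v r
    apply hC.diag_congr
    intro u hu
    have hux : u ≠ x := fun h => hx (h ▸ hu)
    rw [h2' (v, r) u hux, h2' (v₀, r) u hux]
  have key : ∀ (F : GlobalIdx d L → ℂ), ∑ f, F f = ∑ p, F (e.symm p) := by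
    intro F
    rw [Equiv.sum_comp e.symm F]
  rw [key (fun f => a (f x) (f x) * C f f)]
  have trC : C.trace = (d : ℂ) * ∑ r : ({j : Site L // j ≠ x} → Fin d),
      C (e.symm (v₀, r)) (e.symm (v₀, r)) := by
    rw [Matrix.trace, show (∑ f, C.diag f) = ∑ f, C f f from rfl,
      key (fun f => C f f), Fintype.sum_prod_type]
    rw [Finset.sum_congr rfl (fun v _ => Finset.sum_congr rfl (fun r _ => hdiag v r))]
    rw [Finset.sum_const, Finset.card_univ, Fintype.card_fin, nsmul_eq_mul]
  rw [Fintype.sum_prod_type]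
  have hterm : ∀ v : Fin d, ∑ r : ({j : Site L // j ≠ x} → Fin d),
      a ((e.symm (v, r)) x) ((e.symm (v, r)) x) * C (e.symm (v, r)) (e.symm (v, r)) =
      a v v * ∑ r : ({j : Site L // j ≠ x} → Fin d),
        C (e.symm (v₀, r)) (e.symm (v₀, r)) := by
    intro v
    rw [Finset.mul_sum]
    apply Finset.sum_congr rfl
    intro r _
    rw [h2 (v, r), hdiag v r]
  rw [Finset.sum_congr rfl (fun v _ => hterm v)]
  rw [← Finset.sum_mul, trC, Matrix.trace]
  show (d : ℂ) * ((∑ v, a.diag v) * ∑ r, C _ _) = (∑ v, a.diag v) * ((d:ℂ) * ∑ r, C _ _)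
  ring

lemma pow_mul_conjT_pow {n : Type*} [Fintype n] [DecidableEq n]
    {M : Matrix n n ℂ} (hM : IsUnitary M) (t : ℕ) : M ^ t * (Mᴴ) ^ t = 1 := by
  induction t with
  | zero => simp
  | succ t ih =>
    rw [pow_succ M t, pow_succ' (Mᴴ) t,
      show M ^ t * M * (Mᴴ * Mᴴ ^ t) = M ^ t * (M * Mᴴ) * Mᴴ ^ t from by
        simp only [Matrix.mul_assoc], hM.1, Matrix.mul_one, ih]

end Traces

/-- If `x` lies outside the light-cone base of `y`, the infinite-temperature dynamic
correlation factorizes into the product of the normalized traces. -/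
theorem dynamic_correlation_outside_lightcone (d L t : ℕ) [NeZero L]
    (hd : 1 ≤ d) (hL : Even L) (hL2 : 2 ≤ L) (ht : 1 ≤ t)
    (U : Matrix (FourIdx d) (FourIdx d) ℂ) (hU : IsUnitary U)
    (x y : Site L) (hx : x ∉ LCfin y t) :
    ∀ a b : Matrix (Fin d) (Fin d) ℂ,
      (1 / (d : ℂ) ^ (L ^ 2)) *
        (siteOpG a x * (Ustep d L U)ᴴ ^ t * siteOpG b y * (Ustep d L U) ^ t).trace =
      (1 / (d : ℂ) ^ 2) * a.trace * b.trace := by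
  intro a b
  obtain ⟨n, rfl⟩ : ∃ n, t = n + 1 := ⟨t - 1, by omega⟩
  have hUee : IsUnitary (Uee d L U) := by
    rw [Uee_eq]
    apply isUnitary_list_prod
    intro M hM
    rw [List.mem_map] at hM
    obtain ⟨w, _, rfl⟩ := hM
    exact plaqOp_unitary hL2 hU w
  have hUoo : IsUnitary (Uoo d L U) := by
    rw [Uoo_eq]
    apply isUnitary_list_prod
    intro M hM
    rw [List.mem_map] at hM
    obtain ⟨w, _, rfl⟩ := hM
    exact plaqOp_unitary hL2 hU w
  have h𝕌u : IsUnitary (Ustep d L U) := IsUnitary.mul' hUoo hUee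
  have hsupp := main_supp hL hL2 hU y b n
  have hLC : LCfin y (n + 1) = ballF (plaqF (msite y)) (2 * n + 1) := by
    unfold LCfin ballF plaqF
    rw [show 2 * (n + 1) - 1 = 2 * n + 1 from by omega]
  have hxnot : x ∉ ballF (plaqF (msite y)) (2 * n + 1) := by
    rw [← hLC]; exact hx
  have hassoc : siteOpG a x * (Ustep d L U)ᴴ ^ (n + 1) * siteOpG b y * (Ustep d L U) ^ (n + 1)
      = siteOpG a x * ((Ustep d L U)ᴴ ^ (n + 1) * siteOpG b y * (Ustep d L U) ^ (n + 1)) := by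
    simp only [Matrix.mul_assoc]
  have hkey := trace_site_mul hd hxnot hsupp a
  have htrC : ((Ustep d L U)ᴴ ^ (n + 1) * siteOpG b y * (Ustep d L U) ^ (n + 1)).trace
      = ((d : ℂ) ^ (L ^ 2 - 1)) * b.trace := by
    rw [Matrix.trace_mul_comm ((Ustep d L U)ᴴ ^ (n + 1) * siteOpG b y) ((Ustep d L U) ^ (n + 1))]
    rw [show (Ustep d L U) ^ (n + 1) * ((Ustep d L U)ᴴ ^ (n + 1) * siteOpG b y)
        = ((Ustep d L U) ^ (n + 1) * (Ustep d L U)ᴴ ^ (n + 1)) * siteOpG b y from by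
      simp only [Matrix.mul_assoc]]
    rw [pow_mul_conjT_pow h𝕌u, Matrix.one_mul, trace_siteOpG]
  have hd0 : (d : ℂ) ≠ 0 := Nat.cast_ne_zero.mpr (by omega)
  have hsq : 1 ≤ L ^ 2 := by nlinarith
  have hpow : (d : ℂ) ^ (L ^ 2) = (d : ℂ) ^ (L ^ 2 - 1) * d := by
    rw [← pow_succ]
    congr 1
    omega
  rw [hassoc]
  rw [htrC] at hkey
  have htr : (siteOpG a x *
      ((Ustep d L U)ᴴ ^ (n + 1) * siteOpG b y * (Ustep d L U) ^ (n + 1))).trace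
      = a.trace * ((d : ℂ) ^ (L ^ 2 - 1) * b.trace) / d := by
    rw [eq_div_iff hd0]
    linear_combination hkey
  rw [htr, hpow]
  field_simp
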